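/- Let r = p/q ∈ R_{m,n} be nondegenerate with normalized coefficient vector, S = S(q,-p). If r̃ = p̃/q̃ ∈ R_{m,n} satisfies √(2(m+n+1))·d(r,r̃)·κ(S) ≤ 1/3, then r̃ is also nondegenerate and its Sylvester-like matrix S̃ = S(q̃,-p̃) satisfies κ(S̃) ≤ 2·κ(S). -/

import Mathlib

noncomputable section
open Matrix Finset Polynomial

/-- Spectral (operator `ℓ² → ℓ²`) norm of a complex matrix. -/
def specNorm {α β : Type} [Fintype α] [Fintype β] [DecidableEq α] [DecidableEq β]
    (A : Matrix α β ℂ) : ℝ :=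
  ‖(Matrix.toEuclideanLin A).toContinuousLinearMap‖

/-- Moore–Penrose pseudoinverse `A† = Aᴴ (A Aᴴ)⁻¹` of a full row rank matrix. -/
def pinv {α β : Type} [Fintype α] [Fintype β] [DecidableEq α] [DecidableEq β]
    (A : Matrix α β ℂ) : Matrix β α ℂ :=
  Aᴴ * (A * Aᴴ)⁻¹

/-- Sylvester-like matrix `S = S(q,-p)` of size `(m+n+1) × (m+n+2)`: for `0 ≤ k ≤ m` the
`(j,k)` entry is `q_{j-k}`, and for `0 ≤ k ≤ n` the `(j, m+1+k)` entry is `-p_{j-k}`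
(coefficients out of range being `0`). -/
def sylv (m n : ℕ) (p q : Polynomial ℂ) : Matrix (Fin (m + n + 1)) (Fin (m + n + 2)) ℂ :=
  fun j k =>
    if (k : ℕ) ≤ m then
      (if (k : ℕ) ≤ (j : ℕ) then q.coeff ((j : ℕ) - (k : ℕ)) else 0)
    else
      (if (k : ℕ) - (m + 1) ≤ (j : ℕ) then -p.coeff ((j : ℕ) - ((k : ℕ) - (m + 1))) else 0)

/-- Spectral condition number `κ(S) = ‖S‖·‖S†‖` of the Sylvester-like matrix. -/
def condS (m n : ℕ) (p q : Polynomial ℂ) : ℝ :=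
  specNorm (sylv m n p q) * specNorm (pinv (sylv m n p q))

/-- Squared Euclidean norm of the stacked coefficient vector of `p/q ∈ R_{m,n}`. -/
def coeffNorm2 (m n : ℕ) (p q : Polynomial ℂ) : ℝ :=
  (∑ j ∈ Finset.range (m + 1), ‖p.coeff j‖ ^ 2)
    + (∑ j ∈ Finset.range (n + 1), ‖q.coeff j‖ ^ 2)

/-- Distance of the stacked coefficient vectors of `p/q` and of `a·(p̃/q̃)` (viewed in
`R_{m,n}`, i.e. in `ℂ^{m+n+2}`). -/
def coeffDist (m n : ℕ) (p q pt qt : Polynomial ℂ) (a : ℂ) : ℝ :=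
  Real.sqrt ((∑ j ∈ Finset.range (m + 1), ‖p.coeff j - a * pt.coeff j‖ ^ 2)
    + (∑ j ∈ Finset.range (n + 1), ‖q.coeff j - a * qt.coeff j‖ ^ 2))

/-! ### Auxiliary lemmas -/

open scoped Matrix.Norms.L2Operator ComplexOrder

lemma specNorm_eq_norm {α β : Type} [Fintype α] [Fintype β] [DecidableEq α] [DecidableEq β]
    (A : Matrix α β ℂ) : specNorm A = ‖A‖ := (Matrix.l2_opNorm_def A).symm

lemma isUnit_det_of_rank_eq {N : ℕ} (A : Matrix (Fin N) (Fin N) ℂ) (h : A.rank = N) :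
    IsUnit A.det := by
  have hsurj : Function.Surjective A.mulVecLin := by
    rw [← LinearMap.range_eq_top]
    apply Submodule.eq_top_of_finrank_eq
    rw [← Matrix.rank, h]; simp
  have hbij := (LinearMap.injective_iff_surjective (f := A.mulVecLin)).mpr hsurj
  set e := LinearEquiv.ofBijective A.mulVecLin ⟨hbij, hsurj⟩ with he
  have hcoe : (e : (Fin N → ℂ) →ₗ[ℂ] (Fin N → ℂ)) = Matrix.toLin' A := by
    ext x j; simp [he, Matrix.toLin'_apply]
    show A.mulVecLin (Pi.single x 1) j = A j x
    simp [Matrix.mulVecLin_apply]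
  have hA : A = LinearMap.toMatrix' (e : (Fin N → ℂ) →ₗ[ℂ] (Fin N → ℂ)) := by
    rw [hcoe, LinearMap.toMatrix'_toLin']
  have hmul : A * LinearMap.toMatrix' (e.symm : (Fin N → ℂ) →ₗ[ℂ] (Fin N → ℂ)) = 1 := by
    conv_lhs => rw [hA, ← LinearMap.toMatrix'_comp]
    simp
  exact (Matrix.isUnit_iff_isUnit_det A).mp ⟨⟨A, _, hmul, mul_eq_one_comm.mp hmul⟩, rfl⟩

lemma combo_main (p q : Polynomial ℂ) (m n : ℕ) (hp0 : p ≠ 0) (hpm : p.natDegree = m)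
    (hq : q.natDegree ≤ n) (hco : IsCoprime p q) (f : Polynomial ℂ) (hf : f.natDegree ≤ m + n) :
    ∃ A B : Polynomial ℂ, A.natDegree ≤ m ∧ B.natDegree ≤ n ∧ q * A - p * B = f := by
  obtain ⟨u, v, huv⟩ := hco
  set c := p.leadingCoeff with hc
  have hc0 : c ≠ 0 := leadingCoeff_ne_zero.mpr hp0
  set phat := p * Polynomial.C c⁻¹ with hphat
  have hmonic : phat.Monic := monic_mul_leadingCoeff_inv hp0
  set A := (v * f) %ₘ phat with hA
  have hdvd1 : p ∣ (v * f - A) := by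
    have := Polynomial.modByMonic_add_div (v * f) phat
    have h2 : v * f - A = phat * ((v * f) /ₘ phat) := by
      rw [hA]; linear_combination (norm := ring_nf) -this
    rw [h2, hphat]
    exact Dvd.dvd.mul_right (dvd_mul_right p _) _
  have hdegA : A.natDegree ≤ m := by
    have := Polynomial.degree_modByMonic_lt (v * f) hmonic
    have hdeg : phat.degree = (m : ℕ) := by
      rw [hphat]
      rw [degree_mul, degree_C (inv_ne_zero hc0), ← hpm, degree_eq_natDegree hp0]
      simp
    rw [hdeg] at this
    exact natDegree_le_iff_degree_le.mpr (le_of_lt this)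
  have hdvd2 : p ∣ (q * A - f) := by
    obtain ⟨w, hw⟩ := hdvd1
    refine ⟨-u * f - q * w, ?_⟩
    have hAf : A = v * f - p * w := by linear_combination (norm := ring_nf) -hw
    rw [hAf]
    linear_combination (norm := ring_nf) f * huv
  obtain ⟨B, hB⟩ := hdvd2
  refine ⟨A, B, hdegA, ?_, by linear_combination (norm := ring_nf) hB⟩
  by_cases hB0 : B = 0
  · simp [hB0]
  · have h1 : (p * B).natDegree ≤ m + n := by
      rw [← hB]
      refine le_trans (natDegree_sub_le _ _) (max_le (le_trans (natDegree_mul_le) ?_) hf)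
      omega
    rw [natDegree_mul hp0 hB0, hpm] at h1
    omega

lemma combo_exists (p q : Polynomial ℂ) (m n : ℕ) (hp : p.natDegree ≤ m) (hq : q.natDegree ≤ n)
    (hco : IsCoprime p q) (hlead : p.coeff m ≠ 0 ∨ q.coeff n ≠ 0) (f : Polynomial ℂ)
    (hf : f.natDegree ≤ m + n) :
    ∃ A B : Polynomial ℂ, A.natDegree ≤ m ∧ B.natDegree ≤ n ∧ q * A - p * B = f := by
  rcases hlead with hl | hl
  · have hp0 : p ≠ 0 := fun h => hl (by simp [h])
    exact combo_main p q m n hp0 (le_antisymm hp (le_natDegree_of_ne_zero hl)) hq hco f hf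
  · have hq0 : q ≠ 0 := fun h => hl (by simp [h])
    obtain ⟨A, B, hA, hB, h⟩ := combo_main q p n m hq0
      (le_antisymm hq (le_natDegree_of_ne_zero hl)) hp hco.symm f (by omega)
    exact ⟨-B, -A, by simpa using hB, by simpa using hA, by linear_combination (norm := ring_nf) h⟩

lemma sum_ite_coeff (g A : Polynomial ℂ) (dA j : ℕ) (hA : A.natDegree ≤ dA) :
    ∑ k ∈ range (dA+1), (if k ≤ j then g.coeff (j-k) else 0) * A.coeff k = (g*A).coeff j := by
  have hgA : (g*A).coeff j = ∑ k ∈ range (j+1), A.coeff k * g.coeff (j-k) := by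
    rw [mul_comm, Polynomial.coeff_mul,
      Finset.Nat.sum_antidiagonal_eq_sum_range_succ (f := fun a b => A.coeff a * g.coeff b)]
  set T := ∑ k ∈ range (max j dA + 1), (if k ≤ j then A.coeff k * g.coeff (j-k) else 0) with hT
  have h1 : ∑ k ∈ range (dA+1), (if k ≤ j then g.coeff (j-k) else 0) * A.coeff k = T := by
    rw [hT]
    rw [show (∑ k ∈ range (dA+1), (if k ≤ j then g.coeff (j-k) else 0) * A.coeff k)
        = ∑ k ∈ range (dA+1), (if k ≤ j then A.coeff k * g.coeff (j-k) else 0) from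
      Finset.sum_congr rfl (fun k _ => by split_ifs <;> ring)]
    apply Finset.sum_subset (Finset.range_subset_range.mpr (by omega))
    intro k _ hk
    have : A.coeff k = 0 := coeff_eq_zero_of_natDegree_lt (by
      simp only [Finset.mem_range, not_lt] at hk; omega)
    simp [this]
  have h2 : (g*A).coeff j = T := by
    rw [hgA, hT]
    rw [show (∑ k ∈ range (j+1), A.coeff k * g.coeff (j-k))
        = ∑ k ∈ range (j+1), (if k ≤ j then A.coeff k * g.coeff (j-k) else 0) from
      Finset.sum_congr rfl (fun k hk => by
        rw [if_pos (by simp only [Finset.mem_range] at hk; omega)])]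
    apply Finset.sum_subset (Finset.range_subset_range.mpr (by omega))
    intro k _ hk
    rw [if_neg (by simp only [Finset.mem_range, not_lt] at hk; omega)]
  rw [h1, h2]

lemma sylv_mulVec (m n : ℕ) (p q A B : Polynomial ℂ) (hA : A.natDegree ≤ m)
    (hB : B.natDegree ≤ n) (j : Fin (m+n+1)) :
    (sylv m n p q).mulVec
      (fun k : Fin (m+n+2) => if (k:ℕ) ≤ m then A.coeff k else B.coeff ((k:ℕ) - (m+1))) j
      = (q*A - p*B).coeff (j:ℕ) := by
  set F : ℕ → ℂ := fun k =>
    (if k ≤ m then (if k ≤ (j:ℕ) then q.coeff ((j:ℕ)-k) else 0)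
      else (if k-(m+1) ≤ (j:ℕ) then -p.coeff ((j:ℕ)-(k-(m+1))) else 0)) *
    (if k ≤ m then A.coeff k else B.coeff (k-(m+1))) with hF
  have step1 : (sylv m n p q).mulVec
      (fun k : Fin (m+n+2) => if (k:ℕ) ≤ m then A.coeff k else B.coeff ((k:ℕ) - (m+1))) j
      = ∑ k ∈ range (m+n+2), F k := by
    rw [← Fin.sum_univ_eq_sum_range F (m+n+2)]
    rfl
  rw [step1, show m+n+2 = (m+1)+(n+1) by omega, Finset.sum_range_add]
  have e1 : ∑ k ∈ range (m+1), F k = (q*A).coeff (j:ℕ) := by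
    rw [← sum_ite_coeff q A m (j:ℕ) hA]
    apply Finset.sum_congr rfl
    intro k hk
    simp only [Finset.mem_range] at hk
    simp only [hF, if_pos (by omega : k ≤ m)]
  have e2 : ∑ k ∈ range (n+1), F ((m+1)+k) = -((p*B).coeff (j:ℕ)) := by
    have : ∀ k ∈ range (n+1), F ((m+1)+k)
        = (if k ≤ (j:ℕ) then (-p).coeff ((j:ℕ)-k) else 0) * B.coeff k := by
      intro k _
      simp only [hF, if_neg (by omega : ¬ (m+1)+k ≤ m),
        show (m+1)+k-(m+1) = k by omega, Polynomial.coeff_neg]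
    rw [Finset.sum_congr rfl this, sum_ite_coeff (-p) B n (j:ℕ) hB, neg_mul, Polynomial.coeff_neg]
  rw [e1, e2, Polynomial.coeff_sub]
  ring

lemma sylv_rank (m n : ℕ) (p q : Polynomial ℂ) (hp : p.natDegree ≤ m) (hq : q.natDegree ≤ n)
    (hco : IsCoprime p q) (hlead : p.coeff m ≠ 0 ∨ q.coeff n ≠ 0) :
    (sylv m n p q).rank = m + n + 1 := by
  have hsurj : Function.Surjective (sylv m n p q).mulVecLin := by
    intro w
    set f : Polynomial ℂ := ∑ i : Fin (m+n+1), Polynomial.C (w i) * Polynomial.X ^ (i:ℕ)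
      with hfdef
    have hdegf : f.natDegree ≤ m + n := by
      apply Polynomial.natDegree_sum_le_of_forall_le
      intro i _
      exact le_trans (Polynomial.natDegree_C_mul_le _ _) (by simpa using Nat.lt_succ_iff.mp i.2)
    have hcoef : ∀ j : Fin (m+n+1), f.coeff (j:ℕ) = w j := by
      intro j
      rw [hfdef, Polynomial.finset_sum_coeff]
      rw [Finset.sum_eq_single j]
      · simp
      · intro i _ hij
        simp only [Polynomial.coeff_C_mul, Polynomial.coeff_X_pow]
        rw [if_neg (fun h => hij (Fin.ext h.symm))]
        simp
      · simp
    obtain ⟨A, B, hA, hB, hAB⟩ := combo_exists p q m n hp hq hco hlead f hdegf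
    refine ⟨(fun k : Fin (m+n+2) => if (k:ℕ) ≤ m then A.coeff k else B.coeff ((k:ℕ) - (m+1))), ?_⟩
    funext j
    rw [Matrix.mulVecLin_apply, sylv_mulVec m n p q A B hA hB j, hAB, hcoef]
  rw [Matrix.rank, LinearMap.range_eq_top.mpr hsurj, finrank_top]
  simp

lemma specNorm_le_of_frobenius {α β : Type} [Fintype α] [Fintype β] [DecidableEq α]
    [DecidableEq β] (A : Matrix α β ℂ) (c : ℝ) (hc : 0 ≤ c)
    (h : ∑ j, ∑ k, ‖A j k‖^2 ≤ c^2) : specNorm A ≤ c := by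
  rw [specNorm]
  refine ContinuousLinearMap.opNorm_le_bound _ hc (fun x => ?_)
  have happ : ‖(Matrix.toEuclideanLin A).toContinuousLinearMap x‖
      = ‖(WithLp.equiv 2 (α → ℂ)).symm (A *ᵥ (WithLp.equiv 2 (β → ℂ)) x)‖ := by
    rw [LinearMap.coe_toContinuousLinearMap', Matrix.toEuclideanLin_apply]
    rfl
  rw [happ, EuclideanSpace.norm_eq]
  have hxsq : ∑ k, ‖x k‖^2 = ‖x‖^2 := by
    rw [EuclideanSpace.norm_eq, Real.sq_sqrt (by positivity)]
  have key : ∀ j, ‖(A *ᵥ (WithLp.equiv 2 (β → ℂ)) x) j‖^2 ≤ (∑ k, ‖A j k‖^2) * ‖x‖^2 := by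
    intro j
    have h1 : ‖(A *ᵥ (WithLp.equiv 2 (β → ℂ)) x) j‖ ≤ ∑ k, ‖A j k‖ * ‖x k‖ := by
      refine le_trans (norm_sum_le _ _) (le_of_eq ?_)
      exact Finset.sum_congr rfl (fun k _ => norm_mul _ _)
    have h2 : (∑ k, ‖A j k‖ * ‖x k‖)^2 ≤ (∑ k, ‖A j k‖^2) * (∑ k, ‖x k‖^2) :=
      Finset.sum_mul_sq_le_sq_mul_sq _ _ _
    calc ‖(A *ᵥ (WithLp.equiv 2 (β → ℂ)) x) j‖^2
        ≤ (∑ k, ‖A j k‖ * ‖x k‖)^2 := by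
          apply pow_le_pow_left₀ (norm_nonneg _) h1
      _ ≤ (∑ k, ‖A j k‖^2) * ‖x‖^2 := by rw [← hxsq]; exact h2
  calc Real.sqrt (∑ j, ‖((WithLp.equiv 2 (α → ℂ)).symm (A *ᵥ (WithLp.equiv 2 (β → ℂ)) x)) j‖^2)
      ≤ Real.sqrt (c^2 * ‖x‖^2) := by
        apply Real.sqrt_le_sqrt
        calc ∑ j, ‖((WithLp.equiv 2 (α → ℂ)).symm (A *ᵥ (WithLp.equiv 2 (β → ℂ)) x)) j‖^2
            = ∑ j, ‖(A *ᵥ (WithLp.equiv 2 (β → ℂ)) x) j‖^2 := rfl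
          _ ≤ ∑ j, (∑ k, ‖A j k‖^2) * ‖x‖^2 := Finset.sum_le_sum (fun j _ => key j)
          _ = (∑ j, ∑ k, ‖A j k‖^2) * ‖x‖^2 := by rw [Finset.sum_mul]
          _ ≤ c^2 * ‖x‖^2 := by
              apply mul_le_mul_of_nonneg_right h (by positivity)
    _ = c * ‖x‖ := by
        rw [Real.sqrt_mul (by positivity), Real.sqrt_sq hc, Real.sqrt_sq (norm_nonneg _)]

lemma col_le_specNorm {α β : Type} [Fintype α] [Fintype β] [DecidableEq α] [DecidableEq β]
    (A : Matrix α β ℂ) (k : β) : Real.sqrt (∑ j, ‖A j k‖^2) ≤ specNorm A := by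
  have h := Matrix.l2_opNorm_mulVec A (EuclideanSpace.single k 1)
  rw [EuclideanSpace.norm_single, norm_one, mul_one] at h
  rw [specNorm_eq_norm]
  refine le_trans (le_of_eq ?_) h
  rw [EuclideanSpace.norm_eq]
  congr 1
  apply Finset.sum_congr rfl
  intro j _
  congr 1
  show ‖A j k‖ = ‖(A *ᵥ (EuclideanSpace.single k 1)) j‖
  congr 1
  simp [Matrix.mulVec, dotProduct, EuclideanSpace.single_apply]

lemma shift_col_sum (Q : Polynomial ℂ) (n a b : ℕ) (hQ : Q.natDegree ≤ n) (hab : n + 1 ≤ b) :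
    ∑ j ∈ range (a + b), ‖if a ≤ j then Q.coeff (j - a) else 0‖^2
      = ∑ i ∈ range (n+1), ‖Q.coeff i‖^2 := by
  rw [Finset.sum_range_add]
  have h1 : ∑ j ∈ range a, ‖if a ≤ j then Q.coeff (j - a) else 0‖^2 = 0 := by
    apply Finset.sum_eq_zero
    intro j hj
    simp only [Finset.mem_range] at hj
    rw [if_neg (by omega)]
    simp
  have h2 : ∀ i ∈ range b, ‖if a ≤ a + i then Q.coeff (a + i - a) else 0‖^2
      = ‖Q.coeff i‖^2 := by
    intro i _
    rw [if_pos (by omega), show a + i - a = i by omega]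
  rw [h1, Finset.sum_congr rfl h2, zero_add]
  symm
  apply Finset.sum_subset (Finset.range_subset_range.mpr hab)
  intro i _ hi
  simp only [Finset.mem_range, not_lt] at hi
  rw [coeff_eq_zero_of_natDegree_lt (by omega)]
  simp

lemma sylv_col (m n : ℕ) (P Q : Polynomial ℂ) (hP : P.natDegree ≤ m) (hQ : Q.natDegree ≤ n)
    (k : Fin (m+n+2)) :
    ∑ j, ‖sylv m n P Q j k‖^2 =
      if (k:ℕ) ≤ m then (∑ i ∈ range (n+1), ‖Q.coeff i‖^2)
      else (∑ i ∈ range (m+1), ‖P.coeff i‖^2) := by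
  by_cases hk : (k:ℕ) ≤ m
  · rw [if_pos hk]
    have : ∀ j : Fin (m+n+1), ‖sylv m n P Q j k‖^2
        = (fun j : ℕ => ‖if (k:ℕ) ≤ j then Q.coeff (j-(k:ℕ)) else 0‖^2) (j:ℕ) := by
      intro j; simp only [sylv, if_pos hk]
    rw [Finset.sum_congr rfl (fun j _ => this j),
      Fin.sum_univ_eq_sum_range (fun j : ℕ => ‖if (k:ℕ) ≤ j then Q.coeff (j-(k:ℕ)) else 0‖^2),
      show m+n+1 = (k:ℕ) + (m+n+1-(k:ℕ)) by omega]
    exact shift_col_sum Q n (k:ℕ) (m+n+1-(k:ℕ)) hQ (by omega)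
  · rw [if_neg hk]
    have : ∀ j : Fin (m+n+1), ‖sylv m n P Q j k‖^2
        = (fun j : ℕ => ‖if ((k:ℕ)-(m+1)) ≤ j then P.coeff (j-((k:ℕ)-(m+1))) else 0‖^2)
          (j:ℕ) := by
      intro j
      simp only [sylv, if_neg hk]
      split_ifs <;> simp
    rw [Finset.sum_congr rfl (fun j _ => this j),
      Fin.sum_univ_eq_sum_range
        (fun j : ℕ => ‖if ((k:ℕ)-(m+1)) ≤ j then P.coeff (j-((k:ℕ)-(m+1))) else 0‖^2),
      show m+n+1 = ((k:ℕ)-(m+1)) + (m+n+1-((k:ℕ)-(m+1))) by omega]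
    exact shift_col_sum P m _ _ hP (by omega)

lemma sylv_frob (m n : ℕ) (P Q : Polynomial ℂ) (hP : P.natDegree ≤ m) (hQ : Q.natDegree ≤ n) :
    ∑ j, ∑ k, ‖sylv m n P Q j k‖^2
      = (m+1) * (∑ i ∈ range (n+1), ‖Q.coeff i‖^2)
        + (n+1) * (∑ i ∈ range (m+1), ‖P.coeff i‖^2) := by
  rw [Finset.sum_comm]
  set Sq := ∑ i ∈ range (n+1), ‖Q.coeff i‖^2
  set Sp := ∑ i ∈ range (m+1), ‖P.coeff i‖^2
  rw [Finset.sum_congr rfl (fun k _ => sylv_col m n P Q hP hQ k)]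
  rw [Fin.sum_univ_eq_sum_range (fun k : ℕ => if k ≤ m then Sq else Sp),
    show m+n+2 = (m+1) + (n+1) by omega, Finset.sum_range_add]
  have h1 : ∀ k ∈ range (m+1), (if k ≤ m then Sq else Sp) = Sq := by
    intro k hk; simp only [Finset.mem_range] at hk; rw [if_pos (by omega)]
  have h2 : ∀ k ∈ range (n+1), (if (m+1)+k ≤ m then Sq else Sp) = Sp := by
    intro k _; rw [if_neg (by omega)]
  rw [Finset.sum_congr rfl h1, Finset.sum_congr rfl h2, Finset.sum_const, Finset.sum_const]
  simp only [Finset.card_range, nsmul_eq_mul]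
  push_cast
  ring

lemma sylv_sub (m n : ℕ) (p q pt qt : Polynomial ℂ) :
    sylv m n p q - sylv m n pt qt = sylv m n (p - pt) (q - qt) := by
  ext j k
  simp only [Matrix.sub_apply, sylv]
  split_ifs <;> simp [Polynomial.coeff_sub] <;> ring

lemma matrix_norm_one {N : ℕ} [NeZero N] : ‖(1 : Matrix (Fin N) (Fin N) ℂ)‖ = 1 := by
  rw [Matrix.cstar_norm_def, _root_.map_one]
  exact ContinuousLinearMap.norm_id

/-- if `r = p/q` is nondegenerate and normalized and
`√(2(m+n+1)) d(r,r̃) κ(S) ≤ 1/3`, then `r̃` is nondegenerate (its Sylvester-like matrix has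
full row rank) and `κ(S̃) ≤ 2 κ(S)`. -/
theorem perturbed_nondegenerate_and_conditioned (m n : ℕ) (p q pt qt : Polynomial ℂ)
    (hp : p.natDegree ≤ m) (hq : q.natDegree ≤ n)
    (hpt : pt.natDegree ≤ m) (hqt : qt.natDegree ≤ n)
    (hco : IsCoprime p q) (hlead : p.coeff m ≠ 0 ∨ q.coeff n ≠ 0)
    (hnorm : coeffNorm2 m n p q = 1) (hnormt : coeffNorm2 m n pt qt = 1)
    (hopt : ∀ a : ℂ, ‖a‖ = 1 →
      coeffDist m n p q pt qt 1 ≤ coeffDist m n p q pt qt a)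
    (hsmall : Real.sqrt (2 * (m + n + 1)) * coeffDist m n p q pt qt 1 * condS m n p q ≤ 1 / 3) :
    (sylv m n pt qt).rank = m + n + 1 ∧ condS m n pt qt ≤ 2 * condS m n p q := by
  classical
  set S := sylv m n p q with hSdef
  set T := sylv m n pt qt with hTdef
  set d := coeffDist m n p q pt qt 1 with hddef
  clear_value S T d
  have hd0 : 0 ≤ d := by rw [hddef, coeffDist]; exact Real.sqrt_nonneg _
  -- rank of S
  have hrkS : S.rank = m + n + 1 := by
    rw [hSdef]; exact sylv_rank m n p q hp hq hco hlead
  have hdetS : IsUnit (S * Sᴴ).det := by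
    apply isUnit_det_of_rank_eq
    rw [Matrix.rank_self_mul_conjTranspose, hrkS]
  have hSpinv : S * pinv S = 1 := by
    rw [pinv, ← Matrix.mul_assoc, Matrix.mul_nonsing_inv _ hdetS]
  -- distance squared
  have hnn : (0:ℝ) ≤ (∑ j ∈ Finset.range (m + 1), ‖p.coeff j - 1 * pt.coeff j‖ ^ 2)
      + (∑ j ∈ Finset.range (n + 1), ‖q.coeff j - 1 * qt.coeff j‖ ^ 2) :=
    add_nonneg (Finset.sum_nonneg fun i _ => sq_nonneg _)
      (Finset.sum_nonneg fun i _ => sq_nonneg _)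
  have hd2 : d^2 = (∑ i ∈ range (m+1), ‖(p-pt).coeff i‖^2)
      + (∑ i ∈ range (n+1), ‖(q-qt).coeff i‖^2) := by
    rw [hddef, coeffDist, Real.sq_sqrt hnn]
    congr 1 <;> refine Finset.sum_congr rfl (fun i _ => ?_) <;>
      rw [Polynomial.coeff_sub, one_mul]
  -- norm of the perturbation
  have hmn1 : (0:ℝ) ≤ (m:ℝ)+n+1 := add_nonneg (add_nonneg m.cast_nonneg n.cast_nonneg) zero_le_one
  have hDp0 : 0 ≤ ∑ i ∈ range (m+1), ‖(p-pt).coeff i‖^2 :=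
    Finset.sum_nonneg fun i _ => sq_nonneg _
  have hDq0 : 0 ≤ ∑ i ∈ range (n+1), ‖(q-qt).coeff i‖^2 :=
    Finset.sum_nonneg fun i _ => sq_nonneg _
  have hD : specNorm (S - T) ≤ Real.sqrt ((m:ℝ)+n+1) * d := by
    apply specNorm_le_of_frobenius _ _ (mul_nonneg (Real.sqrt_nonneg _) hd0)
    rw [hSdef, hTdef, sylv_sub,
      sylv_frob m n (p-pt) (q-qt)
        (le_trans (natDegree_sub_le _ _) (by omega))
        (le_trans (natDegree_sub_le _ _) (by omega))]
    rw [mul_pow, Real.sq_sqrt hmn1, hd2]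
    push_cast
    nlinarith [hDp0, hDq0]
  -- lower bound on ‖S‖
  haveI : NeZero (m+n+2) := ⟨by omega⟩
  have hs0 : 0 ≤ specNorm S := by rw [specNorm_eq_norm]; exact norm_nonneg _
  have hcolS : 1 ≤ Real.sqrt 2 * specNorm S := by
    set Sq := ∑ i ∈ range (n+1), ‖q.coeff i‖^2 with hSq
    set Sp := ∑ i ∈ range (m+1), ‖p.coeff i‖^2 with hSp
    clear_value Sq Sp
    have hSq0 : 0 ≤ Sq := by
      rw [hSq]; exact Finset.sum_nonneg fun i _ => sq_nonneg _
    have hSp0 : 0 ≤ Sp := by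
      rw [hSp]; exact Finset.sum_nonneg fun i _ => sq_nonneg _
    have hsum : Sp + Sq = 1 := by
      rw [← hnorm, coeffNorm2, hSp, hSq]
    have hq' : Real.sqrt Sq ≤ specNorm S := by
      have h := col_le_specNorm (sylv m n p q) (⟨0, by omega⟩ : Fin (m+n+2))
      rw [sylv_col m n p q hp hq,
        if_pos (show ((⟨0, by omega⟩ : Fin (m+n+2)) : ℕ) ≤ m from Nat.zero_le m),
        ← hSdef, ← hSq] at h
      exact h
    have hp' : Real.sqrt Sp ≤ specNorm S := by
      have h := col_le_specNorm (sylv m n p q) (⟨m+1, by omega⟩ : Fin (m+n+2))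
      rw [sylv_col m n p q hp hq,
        if_neg (show ¬ ((⟨m+1, by omega⟩ : Fin (m+n+2)) : ℕ) ≤ m by simp),
        ← hSdef, ← hSp] at h
      exact h
    have h1 : Sq ≤ (specNorm S)^2 :=
      calc Sq = (Real.sqrt Sq)^2 := (Real.sq_sqrt hSq0).symm
        _ ≤ (specNorm S)^2 := pow_le_pow_left₀ (Real.sqrt_nonneg _) hq' 2
    have h2 : Sp ≤ (specNorm S)^2 :=
      calc Sp = (Real.sqrt Sp)^2 := (Real.sq_sqrt hSp0).symm
        _ ≤ (specNorm S)^2 := pow_le_pow_left₀ (Real.sqrt_nonneg _) hp' 2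
    have h3 : 1 ≤ 2 * (specNorm S)^2 := by linarith
    calc (1:ℝ) = Real.sqrt 1 := Real.sqrt_one.symm
      _ ≤ Real.sqrt (2 * (specNorm S)^2) := Real.sqrt_le_sqrt (by linarith)
      _ = Real.sqrt 2 * specNorm S := by
          rw [Real.sqrt_mul (by norm_num : (0:ℝ) ≤ 2), Real.sqrt_sq hs0]
  -- the perturbation matrix E
  set E := pinv S * (S - T) with hEdef
  clear_value E
  have hsq2 : Real.sqrt (2 * ((m:ℝ) + n + 1)) = Real.sqrt 2 * Real.sqrt ((m:ℝ)+n+1) :=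
    Real.sqrt_mul (by norm_num) _
  have hb0 : 0 ≤ specNorm (pinv S) := by rw [specNorm_eq_norm]; exact norm_nonneg _
  have he0 : 0 ≤ Real.sqrt ((m:ℝ)+n+1) := Real.sqrt_nonneg _
  have hE : ‖E‖ ≤ 1/3 := by
    have h1 : ‖E‖ ≤ ‖pinv S‖ * ‖S - T‖ := by
      rw [hEdef]; exact Matrix.l2_opNorm_mul _ _
    have h2 : ‖pinv S‖ * ‖S - T‖ ≤ specNorm (pinv S) * (Real.sqrt ((m:ℝ)+n+1) * d) := by
      rw [specNorm_eq_norm]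
      apply mul_le_mul_of_nonneg_left _ (norm_nonneg _)
      rw [← specNorm_eq_norm]; exact hD
    have h3 : specNorm (pinv S) * (Real.sqrt ((m:ℝ)+n+1) * d)
        ≤ (Real.sqrt 2 * specNorm S) * (specNorm (pinv S) * (Real.sqrt ((m:ℝ)+n+1) * d)) :=
      le_mul_of_one_le_left (mul_nonneg hb0 (mul_nonneg he0 hd0)) hcolS
    have h4 : (Real.sqrt 2 * specNorm S) * (specNorm (pinv S) * (Real.sqrt ((m:ℝ)+n+1) * d))
        = Real.sqrt (2 * ((m:ℝ) + n + 1)) * d * condS m n p q := by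
      rw [hsq2, condS, ← hSdef]
      ring
    calc ‖E‖ ≤ ‖pinv S‖ * ‖S - T‖ := h1
      _ ≤ specNorm (pinv S) * (Real.sqrt ((m:ℝ)+n+1) * d) := h2
      _ ≤ Real.sqrt (2 * ((m:ℝ) + n + 1)) * d * condS m n p q := by rw [← h4]; exact h3
      _ ≤ 1/3 := by
          refine le_trans (le_of_eq ?_) hsmall
          norm_num
  -- T = S (1 - E)
  have hTE : T = S * (1 - E) := by
    rw [Matrix.mul_sub, Matrix.mul_one, hEdef, ← Matrix.mul_assoc, hSpinv, Matrix.one_mul,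
      sub_sub_cancel]
  have hdet1E : IsUnit (1 - E).det := by
    have hunit : IsUnit (1 - E) := (Units.oneSub E (lt_of_le_of_lt hE (by norm_num))).isUnit
    exact (Matrix.isUnit_iff_isUnit_det _).mp hunit
  -- rank of T
  have hrkT : T.rank = m + n + 1 := by
    rw [hTE, Matrix.rank_mul_eq_left_of_isUnit_det _ _ hdet1E, hrkS]
  refine ⟨hrkT, ?_⟩
  -- pseudoinverse of T
  have hdetT : IsUnit (T * Tᴴ).det := by
    apply isUnit_det_of_rank_eq
    rw [Matrix.rank_self_mul_conjTranspose, hrkT]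
  have hTpinv : T * pinv T = 1 := by
    rw [pinv, ← Matrix.mul_assoc, Matrix.mul_nonsing_inv _ hdetT]
  -- bound on (1-E)⁻¹
  set R := (1 - E)⁻¹ with hRdef
  clear_value R
  have hR1 : (1 - E) * R = 1 := by
    rw [hRdef]; exact Matrix.mul_nonsing_inv _ hdet1E
  have hRnorm : ‖R‖ ≤ 3/2 := by
    have hRe : R = 1 + E * R := by
      have h := hR1
      rw [sub_mul, one_mul] at h
      exact sub_eq_iff_eq_add.mp h
    have hER : ‖E * R‖ ≤ ‖E‖ * ‖R‖ := Matrix.l2_opNorm_mul _ _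
    have hstep : ‖R‖ ≤ 1 + ‖E‖ * ‖R‖ := by
      calc ‖R‖ = ‖1 + E * R‖ := by rw [← hRe]
        _ ≤ ‖(1 : Matrix (Fin (m+n+2)) (Fin (m+n+2)) ℂ)‖ + ‖E * R‖ := norm_add_le _ _
        _ ≤ 1 + ‖E‖ * ‖R‖ := by rw [matrix_norm_one]; linarith
    have h13 : ‖E‖ * ‖R‖ ≤ (1/3) * ‖R‖ :=
      mul_le_mul_of_nonneg_right hE (norm_nonneg _)
    linarith
  -- right inverse of T
  have hright : T * (R * pinv S) = 1 := by
    rw [hTE, Matrix.mul_assoc, ← Matrix.mul_assoc (1-E) R (pinv S), hR1, Matrix.one_mul, hSpinv]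
  -- the projection P = T† T
  set P := pinv T * T with hPdef
  clear_value P
  have hinvH : ((T*Tᴴ)⁻¹)ᴴ = (T*Tᴴ)⁻¹ := by
    rw [Matrix.conjTranspose_nonsing_inv]
    congr 1
    rw [Matrix.conjTranspose_mul, Matrix.conjTranspose_conjTranspose]
  have hPH : Pᴴ = P := by
    rw [hPdef, pinv, Matrix.conjTranspose_mul, Matrix.conjTranspose_mul, hinvH,
      Matrix.conjTranspose_conjTranspose]
    exact (Matrix.mul_assoc _ _ _).symm
  have hPP : P * P = P := by
    rw [hPdef]
    calc (pinv T * T) * (pinv T * T) = pinv T * ((T * pinv T) * T) := by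
          rw [Matrix.mul_assoc, ← Matrix.mul_assoc T (pinv T) T]
      _ = pinv T * T := by rw [hTpinv, Matrix.one_mul]
  have hPnorm : ‖P‖ ≤ 1 := by
    have h := CStarRing.norm_star_mul_self (x := P)
    rw [Matrix.star_eq_conjTranspose, hPH, hPP] at h
    have hz : ‖P‖ * (‖P‖ - 1) = 0 := by linear_combination -h
    rcases mul_eq_zero.mp hz with h0 | h0
    · rw [h0]; norm_num
    · have h1 : ‖P‖ = 1 := by linarith
      rw [h1]
  have hpinvT : pinv T = P * (R * pinv S) := by
    rw [hPdef, Matrix.mul_assoc, hright, Matrix.mul_one]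
  have hbT : ‖pinv T‖ ≤ (3/2) * ‖pinv S‖ := by
    rw [hpinvT]
    calc ‖P * (R * pinv S)‖ ≤ ‖P‖ * ‖R * pinv S‖ := Matrix.l2_opNorm_mul _ _
      _ ≤ 1 * (‖R‖ * ‖pinv S‖) := by
          apply mul_le_mul hPnorm (Matrix.l2_opNorm_mul _ _) (norm_nonneg _) (by norm_num)
      _ ≤ (3/2) * ‖pinv S‖ := by
          rw [one_mul]
          exact mul_le_mul_of_nonneg_right hRnorm (norm_nonneg _)
  have hTnorm : ‖T‖ ≤ (4/3) * ‖S‖ := by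
    rw [hTE]
    calc ‖S * (1-E)‖ ≤ ‖S‖ * ‖1-E‖ := Matrix.l2_opNorm_mul _ _
      _ ≤ ‖S‖ * (4/3) := by
          apply mul_le_mul_of_nonneg_left _ (norm_nonneg _)
          calc ‖(1 : Matrix (Fin (m+n+2)) (Fin (m+n+2)) ℂ) - E‖
              ≤ ‖(1 : Matrix (Fin (m+n+2)) (Fin (m+n+2)) ℂ)‖ + ‖E‖ := norm_sub_le _ _
            _ ≤ 1 + 1/3 := by rw [matrix_norm_one]; linarith
            _ = 4/3 := by norm_num
      _ = (4/3) * ‖S‖ := by ring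
  have hcond1 : condS m n pt qt = ‖T‖ * ‖pinv T‖ := by
    rw [condS, specNorm_eq_norm, specNorm_eq_norm, ← hTdef]
  have hcond2 : condS m n p q = ‖S‖ * ‖pinv S‖ := by
    rw [condS, specNorm_eq_norm, specNorm_eq_norm, ← hSdef]
  rw [hcond1, hcond2]
  calc ‖T‖ * ‖pinv T‖ ≤ ((4/3) * ‖S‖) * ((3/2) * ‖pinv S‖) :=
        mul_le_mul hTnorm hbT (norm_nonneg _) (mul_nonneg (by norm_num) (norm_nonneg _))
    _ = 2 * (‖S‖ * ‖pinv S‖) := by ring
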